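/- Let s, t : ℕ → ℤ be IQ functions taking positive values for all sufficiently large n. Then the function n ↦ gcd(s(n), t(n)) agrees, for all sufficiently large n, with an IQ function; moreover there exist IQ functions A, B such that gcd(s(n), t(n)) = A(n)·s(n) + B(n)·t(n) for all sufficiently large n. -/

import Mathlib

set_option maxRecDepth 4000

/-- `p` is an integral quasipolynomial. -/
def IsQuasiPoly (p : ℕ → ℤ) : Prop :=
  ∃ π : ℕ, 0 < π ∧ ∃ P : ℕ → Polynomial ℤ, ∀ n : ℕ, p n = (P (n % π)).eval (n : ℤ)

/-- `q` is an IQ function. -/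
def IsIQ (q : ℕ → ℤ) : Prop :=
  ∃ p : ℕ → ℤ, IsQuasiPoly p ∧ ∃ C : ℤ, 0 < C ∧ ∀ n : ℕ, C ∣ p n ∧ q n = p n / C

open Polynomial

def QPp (π : ℕ) (p : ℕ → ℤ) : Prop :=
  ∃ P : ℕ → Polynomial ℤ, ∀ n : ℕ, p n = (P (n % π)).eval (n : ℤ)

lemma qpp_mono {π Λ : ℕ} {p : ℕ → ℤ} (h : QPp π p) (hd : π ∣ Λ) : QPp Λ p := by
  obtain ⟨P, hP⟩ := h
  refine ⟨fun k => P (k % π), fun n => ?_⟩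
  show p n = (P (n % Λ % π)).eval (n : ℤ)
  rw [Nat.mod_mod_of_dvd n hd]; exact hP n

lemma qpp_poly {π : ℕ} (f : Polynomial ℤ) : QPp π (fun n => f.eval (n : ℤ)) :=
  ⟨fun _ => f, fun _ => rfl⟩

lemma qpp_add {π : ℕ} {p q : ℕ → ℤ} (hp : QPp π p) (hq : QPp π q) :
    QPp π (fun n => p n + q n) := by
  obtain ⟨P, hP⟩ := hp; obtain ⟨Q, hQ⟩ := hq
  exact ⟨fun k => P k + Q k, fun n => by simp [hP n, hQ n]⟩

lemma qpp_mul {π : ℕ} {p q : ℕ → ℤ} (hp : QPp π p) (hq : QPp π q) :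
    QPp π (fun n => p n * q n) := by
  obtain ⟨P, hP⟩ := hp; obtain ⟨Q, hQ⟩ := hq
  exact ⟨fun k => P k * Q k, fun n => by simp [hP n, hQ n]⟩

lemma qpp_const_mul {π : ℕ} (c : ℤ) {p : ℕ → ℤ} (hp : QPp π p) :
    QPp π (fun n => c * p n) := by
  have := qpp_mul (π := π) (qpp_poly (Polynomial.C c)) hp
  simpa using this

lemma qpp_piecewise {m Λ : ℕ} (hm : 0 < m) (hd : m ∣ Λ) (f : ℕ → ℕ → ℤ)
    (hf : ∀ r < m, QPp Λ (f r)) : QPp Λ (fun n => f (n % m) n) := by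
  choose P hP using hf
  refine ⟨fun k => P (k % m) (Nat.mod_lt _ hm) k, fun n => ?_⟩
  have h1 : n % Λ % m = n % m := Nat.mod_mod_of_dvd n hd
  simp only [h1]
  have := hP (n % m) (Nat.mod_lt _ hm) n
  -- `this : f (n % m) n = (P (n % m) _ (n % Λ)).eval n`
  exact this

/-- `q` times a positive constant is a quasipolynomial. -/
def IQF (q : ℕ → ℤ) : Prop :=
  ∃ (Λ : ℕ) (c : ℤ), 0 < Λ ∧ 0 < c ∧ ∃ h : ℕ → ℤ, QPp Λ h ∧ ∀ n, h n = c * q n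

lemma IQF.isIQ {q : ℕ → ℤ}
    (h : IQF q) :
    ∃ p : ℕ → ℤ, (∃ π : ℕ, 0 < π ∧ ∃ P : ℕ → Polynomial ℤ, ∀ n : ℕ, p n = (P (n % π)).eval (n : ℤ))
      ∧ ∃ C : ℤ, 0 < C ∧ ∀ n : ℕ, C ∣ p n ∧ q n = p n / C := by
  obtain ⟨Λ, c, hΛ, hc, h, ⟨P, hP⟩, he⟩ := h
  refine ⟨h, ⟨Λ, hΛ, P, hP⟩, c, hc, fun n => ?_⟩
  refine ⟨⟨q n, he n⟩, ?_⟩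
  rw [he n, Int.mul_ediv_cancel_left _ hc.ne']

lemma iqf_add {p q : ℕ → ℤ} (hp : IQF p) (hq : IQF q) : IQF (fun n => p n + q n) := by
  obtain ⟨Λ1, c1, hΛ1, hc1, h1, hqp1, he1⟩ := hp
  obtain ⟨Λ2, c2, hΛ2, hc2, h2, hqp2, he2⟩ := hq
  refine ⟨Λ1 * Λ2, c1 * c2, Nat.mul_pos hΛ1 hΛ2, mul_pos hc1 hc2,
    fun n => c2 * h1 n + c1 * h2 n, ?_, fun n => by
      show c2 * h1 n + c1 * h2 n = c1 * c2 * (p n + q n); rw [he1, he2]; ring⟩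
  exact qpp_add (qpp_const_mul _ (qpp_mono hqp1 ⟨Λ2, rfl⟩))
    (qpp_const_mul _ (qpp_mono hqp2 ⟨Λ1, mul_comm _ _⟩))

lemma iqf_mul {p q : ℕ → ℤ} (hp : IQF p) (hq : IQF q) : IQF (fun n => p n * q n) := by
  obtain ⟨Λ1, c1, hΛ1, hc1, h1, hqp1, he1⟩ := hp
  obtain ⟨Λ2, c2, hΛ2, hc2, h2, hqp2, he2⟩ := hq
  refine ⟨Λ1 * Λ2, c1 * c2, Nat.mul_pos hΛ1 hΛ2, mul_pos hc1 hc2,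
    fun n => h1 n * h2 n, ?_, fun n => by
      show h1 n * h2 n = c1 * c2 * (p n * q n); rw [he1, he2]; ring⟩
  exact qpp_mul (qpp_mono hqp1 ⟨Λ2, rfl⟩) (qpp_mono hqp2 ⟨Λ1, mul_comm _ _⟩)

lemma iqf_piecewise {m : ℕ} (hm : 0 < m) (f : ℕ → ℕ → ℤ)
    (hf : ∀ r < m, IQF (f r)) : IQF (fun n => f (n % m) n) := by
  choose Λ c hΛ hc h hq he using hf
  classical
  set Λt : ℕ → ℕ := fun r => if hr : r < m then Λ r hr else 1 with hΛt
  set ct : ℕ → ℤ := fun r => if hr : r < m then c r hr else 1 with hct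
  set Cbig : ℤ := ∏ r ∈ Finset.range m, ct r with hCbig
  set Lbig : ℕ := m * ∏ r ∈ Finset.range m, Λt r with hLbig
  have hLpos : 0 < Lbig := by
    apply Nat.mul_pos hm
    apply Finset.prod_pos
    intro r hr
    simp only [hΛt]
    rw [dif_pos (Finset.mem_range.mp hr)]
    exact hΛ _ _
  have hCpos : 0 < Cbig := by
    apply Finset.prod_pos
    intro r hr
    simp only [hct]
    rw [dif_pos (Finset.mem_range.mp hr)]
    exact hc _ _
  refine ⟨Lbig, Cbig, hLpos, hCpos, fun n => Cbig * f (n % m) n, ?_, fun n => rfl⟩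
  apply qpp_piecewise hm ⟨_, rfl⟩ (fun r n => Cbig * f r n)
  intro r hr
  have hdvd : Λ r hr ∣ Lbig := by
    refine Dvd.dvd.mul_left ?_ m
    have : Λt r = Λ r hr := by simp only [hΛt]; rw [dif_pos hr]
    rw [← this]
    exact Finset.dvd_prod_of_mem Λt (Finset.mem_range.mpr hr)
  have hfac : ∃ d : ℤ, Cbig = d * c r hr := by
    refine ⟨∏ x ∈ (Finset.range m).erase r, ct x, ?_⟩
    rw [hCbig, ← Finset.mul_prod_erase _ _ (Finset.mem_range.mpr hr), mul_comm]
    congr 1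
    simp only [hct]; rw [dif_pos hr]
  obtain ⟨d, hd⟩ := hfac
  have : (fun n => Cbig * f r n) = fun n => d * (h r hr n) := by
    funext n; rw [hd, he r hr n]; ring
  rw [this]
  exact qpp_const_mul _ (qpp_mono (hq r hr) hdvd)

open Polynomial

lemma ev_pos_aux (E : ℕ → ℤ) (N₀ : ℕ) (h : ∀ n ≥ N₀, E n + 1 ≤ E (n + 1)) :
    ∃ N : ℕ, ∀ n ≥ N, 0 < E n := by
  have key : ∀ m : ℕ, E N₀ + m ≤ E (N₀ + m) := by
    intro m
    induction m with
    | zero => simp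
    | succ k ih =>
      have := h (N₀ + k) (Nat.le_add_right _ _)
      have hrw : N₀ + (k + 1) = (N₀ + k) + 1 := rfl
      rw [hrw]
      push_cast
      push_cast at ih
      omega
  refine ⟨N₀ + (1 - E N₀).toNat, fun n hn => ?_⟩
  obtain ⟨m, rfl⟩ := Nat.exists_eq_add_of_le (le_trans (Nat.le_add_right _ _) hn)
  have hm : (1 - E N₀).toNat ≤ m := by omega
  have h2 : (1 : ℤ) - E N₀ ≤ m := le_trans (Int.self_le_toNat _) (by exact_mod_cast hm)
  have := key m
  omega

lemma ev_sign (D : Polynomial ℤ) (hD : D ≠ 0) :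
    ∃ N : ℕ, (∀ n ≥ N, 0 < D.eval (n : ℤ)) ∨ (∀ n ≥ N, D.eval (n : ℤ) < 0) := by
  generalize hd : D.natDegree = d
  induction d using Nat.strong_induction_on generalizing D with
  | _ d ih =>
  rcases Nat.eq_zero_or_pos d with h0 | hpos
  · subst h0
    obtain ⟨c, hc⟩ := Polynomial.natDegree_eq_zero.mp hd
    have hc0 : c ≠ 0 := by rintro rfl; simp at hc; exact hD hc.symm
    rcases lt_or_gt_of_ne hc0 with h | h
    · exact ⟨0, Or.inr fun n _ => by rw [← hc]; simpa using h⟩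
    · exact ⟨0, Or.inl fun n _ => by rw [← hc]; simpa using h⟩
  · set Δ := D.comp (X + C 1) - D with hΔ
    have hev : ∀ x : ℤ, Δ.eval x = D.eval (x + 1) - D.eval x := by
      intro x; simp [hΔ, eval_comp]
    by_cases hΔ0 : Δ = 0
    ·
      exfalso
      have hroots : ∀ n : ℕ, D.eval (n : ℤ) = D.eval 0 := by
        intro n
        induction n with
        | zero => simp
        | succ k ihk =>
          have := hev k
          rw [hΔ0] at this
          simp at this
          push_cast
          omega
      have : D - C (D.eval 0) = 0 := by
        apply Polynomial.eq_zero_of_infinite_isRoot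
        have inj : Function.Injective (fun n : ℕ => (n : ℤ)) := fun a b hab => Nat.cast_injective hab
        apply Set.infinite_of_injective_forall_mem inj
        intro n
        simp only [Set.mem_setOf_eq, IsRoot.def, eval_sub, eval_C, sub_eq_zero]
        exact hroots n
      have hDc : D = C (D.eval 0) := by linear_combination (norm := ring_nf) this
      rw [hDc] at hd
      simp at hd
      omega
    · have hdeg : Δ.natDegree < d := by
        rw [← hd]
        apply Polynomial.natDegree_lt_natDegree hΔ0
        rw [hΔ]
        have hnd1 : (X + C (1:ℤ)).natDegree = 1 := Polynomial.natDegree_X_add_C 1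
        have hlc : (D.comp (X + C 1)).leadingCoeff = D.leadingCoeff := by
          rw [Polynomial.leadingCoeff_comp (by rw [hnd1]; exact one_ne_zero),
            (Polynomial.monic_X_add_C (1:ℤ)).leadingCoeff, one_pow, mul_one]
        have hcne : D.comp (X + C 1) ≠ 0 := by
          rw [← Polynomial.leadingCoeff_ne_zero, hlc, Polynomial.leadingCoeff_ne_zero]
          exact hD
        have hdc : (D.comp (X + C 1)).degree = D.degree := by
          rw [Polynomial.degree_eq_natDegree hcne, Polynomial.degree_eq_natDegree hD,
            Polynomial.natDegree_comp, hnd1, mul_one]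
        rw [← hdc]
        exact Polynomial.degree_sub_lt hdc hcne hlc
      obtain ⟨N₀, hs⟩ := ih Δ.natDegree hdeg Δ hΔ0 rfl
      rcases hs with hp | hneg
      · obtain ⟨N, hN⟩ := ev_pos_aux (fun n => D.eval (n : ℤ)) N₀ (fun n hn => by
          have h1 := hp n hn
          have h2 := hev (n : ℤ)
          show D.eval ((n : ℕ) : ℤ) + 1 ≤ D.eval (((n + 1 : ℕ)) : ℤ)
          push_cast
          omega)
        exact ⟨N, Or.inl hN⟩
      · obtain ⟨N, hN⟩ := ev_pos_aux (fun n => -D.eval (n : ℤ)) N₀ (fun n hn => by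
          have h1 := hneg n hn
          have h2 := hev (n : ℤ)
          show -D.eval ((n : ℕ) : ℤ) + 1 ≤ -D.eval (((n + 1 : ℕ)) : ℤ)
          push_cast
          omega)
        exact ⟨N, Or.inr fun n hn => by have := hN n hn; omega⟩

open Polynomial

noncomputable section

lemma clear_denoms (u : ℚ[X]) :
    ∃ (U : ℤ[X]) (b : ℤ), b ≠ 0 ∧ U.map (algebraMap ℤ ℚ) = Polynomial.C (b : ℚ) * u := by
  obtain ⟨b, hb⟩ := IsLocalization.integerNormalization_map_to_map (nonZeroDivisors ℤ) u
  refine ⟨IsLocalization.integerNormalization (nonZeroDivisors ℤ) u, b, nonZeroDivisors.coe_ne_zero b, ?_⟩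
  rw [hb, zsmul_eq_mul, Polynomial.C_eq_intCast]

end

lemma bez (F₁ G₁ : ℤ[X]) (hF : F₁ ≠ 0) (hG : G₁ ≠ 0)
    (hcop : ∀ h : ℤ[X], h ∣ F₁ → h ∣ G₁ → IsUnit h) :
    ∃ (A B : ℤ[X]) (R : ℤ), 0 < R ∧ A * F₁ + B * G₁ = Polynomial.C R := by
  classical
  set φ := algebraMap ℤ ℚ with hφ
  have hφx : ∀ x : ℤ, φ x = (x : ℚ) := fun x => by simp [hφ]
  have hinj : Function.Injective φ := fun a b hab => by
    simpa using hab
  have hmapinj : Function.Injective (Polynomial.map φ) := Polynomial.map_injective φ hinj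
  set f := F₁.map φ with hf
  set g := G₁.map φ with hg
  have hf0 : f ≠ 0 := by
    rw [hf, Ne, Polynomial.map_eq_zero_iff hinj]; exact hF
  -- show the gcd over ℚ[X] is a unit
  have hunit : IsUnit (EuclideanDomain.gcd f g) := by
    set d := EuclideanDomain.gcd f g with hd
    have hdf : d ∣ f := EuclideanDomain.gcd_dvd_left f g
    have hdg : d ∣ g := EuclideanDomain.gcd_dvd_right f g
    have hd0 : d ≠ 0 := by
      intro h0
      rw [hd, EuclideanDomain.gcd_eq_zero_iff] at h0
      exact hf0 h0.1
    obtain ⟨d₀, b, hb0, hmapd₀⟩ := clear_denoms d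
    have hd₀0 : d₀ ≠ 0 := by
      intro h0
      rw [h0] at hmapd₀
      simp only [Polynomial.map_zero] at hmapd₀
      have : Polynomial.C (b:ℚ) ≠ 0 := by
        simp [Polynomial.C_eq_zero, hb0]
      exact hd0 (by
        rcases mul_eq_zero.mp hmapd₀.symm with h | h
        · exact absurd h this
        · exact h)
    set e := d₀.primPart with he
    have hep : e.IsPrimitive := d₀.isPrimitive_primPart
    have hmape_assoc : ∃ c : ℚ, c ≠ 0 ∧ e.map φ = Polynomial.C c * d := by
      have h1 : d₀ = Polynomial.C d₀.content * e := d₀.eq_C_content_mul_primPart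
      have hc0 : (d₀.content : ℚ) ≠ 0 := by
        simp [Polynomial.content_eq_zero_iff, hd₀0]
      refine ⟨(b : ℚ) / (d₀.content : ℚ), ?_, ?_⟩
      · apply div_ne_zero _ hc0
        exact_mod_cast hb0
      · have h2 : Polynomial.C ((d₀.content : ℤ) : ℚ) * e.map φ = Polynomial.C (b:ℚ) * d := by
          rw [← hmapd₀]
          conv_rhs => rw [h1]
          rw [Polynomial.map_mul, Polynomial.map_C, hφx]
        apply mul_left_cancel₀ (a := Polynomial.C ((d₀.content : ℤ) : ℚ)) (by simpa using hc0)
        rw [h2, ← mul_assoc, ← Polynomial.C_mul]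
        congr 2
        field_simp
    obtain ⟨c, hc0, hmape⟩ := hmape_assoc
    -- e divides F₁ and G₁
    have hediv : ∀ (H : ℤ[X]), H ≠ 0 → d ∣ H.map φ → e ∣ H := by
      intro H hH0 hdH
      have hHp : H.primPart.IsPrimitive := H.isPrimitive_primPart
      have h1 : H = Polynomial.C H.content * H.primPart := H.eq_C_content_mul_primPart
      have hcH : ((H.content : ℤ) : ℚ) ≠ 0 := by
        simp [Polynomial.content_eq_zero_iff, hH0]
      have hdvd : e.map φ ∣ H.primPart.map φ := by
        rw [hmape]
        have h2 : d ∣ Polynomial.C ((H.content:ℤ):ℚ) * H.primPart.map φ := by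
          have : H.map φ = Polynomial.C ((H.content:ℤ):ℚ) * H.primPart.map φ := by
            conv_lhs => rw [h1]
            rw [Polynomial.map_mul, Polynomial.map_C, hφx]
          rwa [this] at hdH
        have h3 : d ∣ H.primPart.map φ := by
          rcases h2 with ⟨w, hw⟩
          refine ⟨Polynomial.C ((H.content:ℤ):ℚ)⁻¹ * w, ?_⟩
          have : Polynomial.C ((H.content:ℤ):ℚ)⁻¹ * (Polynomial.C ((H.content:ℤ):ℚ) * H.primPart.map φ) = H.primPart.map φ := by
            rw [← mul_assoc, ← Polynomial.C_mul, inv_mul_cancel₀ hcH]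
            simp
          rw [← this, hw]
          ring
        rcases h3 with ⟨w, hw⟩
        refine ⟨Polynomial.C c⁻¹ * w, ?_⟩
        rw [hw]
        have hcc : Polynomial.C c * Polynomial.C c⁻¹ = 1 := by
          rw [← Polynomial.C_mul, mul_inv_cancel₀ hc0, Polynomial.C_1]
        linear_combination (-(d*w)) * hcc
      have := hep.dvd_of_fraction_map_dvd_fraction_map (K := ℚ) hdvd
      exact this.trans (Dvd.intro_left _ h1.symm)
    have heF : e ∣ F₁ := hediv F₁ hF hdf
    have heG : e ∣ G₁ := hediv G₁ hG hdg
    have heu : IsUnit e := hcop e heF heG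
    -- hence d is a unit
    have : IsUnit (e.map φ) := heu.map (Polynomial.mapRingHom φ)
    rw [hmape] at this
    have hCc : IsUnit (Polynomial.C c) := Polynomial.isUnit_C.mpr (isUnit_iff_ne_zero.mpr hc0)
    exact (IsUnit.mul_iff.mp this).2
  have hco : IsCoprime f g := EuclideanDomain.gcd_isUnit_iff.mp hunit
  obtain ⟨u, v, huv⟩ := hco
  obtain ⟨U, bu, hbu, hU⟩ := clear_denoms u
  obtain ⟨V, bv, hbv, hV⟩ := clear_denoms v
  have key : (Polynomial.C bv * U) * F₁ + (Polynomial.C bu * V) * G₁ = Polynomial.C (bu * bv) := by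
    apply hmapinj
    have : ((Polynomial.C bv * U) * F₁ + (Polynomial.C bu * V) * G₁).map φ
        = Polynomial.C ((bu : ℚ) * (bv : ℚ)) * (u * f + v * g) := by
      rw [← hφ] at hU hV
      simp only [Polynomial.map_add, Polynomial.map_mul, Polynomial.map_C, hU, hV, hφx,
        Polynomial.C_mul]
      ring
    rw [this, huv, mul_one, Polynomial.map_C, hφx]
    congr 1
    push_cast
    ring
  rcases lt_trichotomy (bu * bv) 0 with hlt | heq | hgt
  · refine ⟨-(Polynomial.C bv * U), -(Polynomial.C bu * V), -(bu * bv), by omega, ?_⟩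
    rw [map_neg]
    linear_combination (norm := ring_nf) -key
  · exact absurd heq (mul_ne_zero hbu hbv)
  · exact ⟨_, _, _, hgt, key⟩

lemma gcd_inv_aux {Rn : ℕ} {f f₀ g g₀ : ℤ} (hf : (Rn:ℤ) ∣ f - f₀) (hg : (Rn:ℤ) ∣ g - g₀) :
    Nat.gcd (Int.gcd f g) Rn ∣ Nat.gcd (Int.gcd f₀ g₀) Rn := by
  set m := Nat.gcd (Int.gcd f g) Rn with hm
  have hmR : m ∣ Rn := Nat.gcd_dvd_right _ _
  have hmRz : (m:ℤ) ∣ (Rn:ℤ) := Int.natCast_dvd_natCast.mpr hmR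
  have hmf : (m:ℤ) ∣ f :=
    (Int.natCast_dvd_natCast.mpr (Nat.gcd_dvd_left _ _)).trans (Int.gcd_dvd_left _ _)
  have hmg : (m:ℤ) ∣ g :=
    (Int.natCast_dvd_natCast.mpr (Nat.gcd_dvd_left _ _)).trans (Int.gcd_dvd_right _ _)
  have hmf₀ : (m:ℤ) ∣ f₀ := by
    have := dvd_sub hmf (hmRz.trans hf)
    simpa using this
  have hmg₀ : (m:ℤ) ∣ g₀ := by
    have := dvd_sub hmg (hmRz.trans hg)
    simpa using this
  exact Nat.dvd_gcd (Int.natCast_dvd_natCast.mp (Int.dvd_coe_gcd hmf₀ hmg₀)) hmR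

lemma gcd_inv {Rn : ℕ} {f f₀ g g₀ : ℤ} (hf : (Rn:ℤ) ∣ f - f₀) (hg : (Rn:ℤ) ∣ g - g₀) :
    Nat.gcd (Int.gcd f g) Rn = Nat.gcd (Int.gcd f₀ g₀) Rn :=
  Nat.dvd_antisymm (gcd_inv_aux hf hg)
    (gcd_inv_aux (by simpa using hf.neg_right) (by simpa using hg.neg_right))

lemma core (F G : Polynomial ℤ) (hF : F ≠ 0) (hG : G ≠ 0) :
    ∃ a b : ℕ → ℤ, IQF a ∧ IQF b ∧ ∃ N : ℕ, ∀ n ≥ N,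
      ((Int.gcd (F.eval (n:ℤ)) (G.eval (n:ℤ)) : ℤ))
        = a n * F.eval (n:ℤ) + b n * G.eval (n:ℤ) := by
  classical
  set D := gcd F G with hD
  obtain ⟨F₁, hF₁⟩ : D ∣ F := gcd_dvd_left F G
  obtain ⟨G₁, hG₁⟩ : D ∣ G := gcd_dvd_right F G
  have hD0 : D ≠ 0 := fun h => hF (by rw [hF₁, h, zero_mul])
  have hF₁0 : F₁ ≠ 0 := fun h => hF (by rw [hF₁, h, mul_zero])
  have hG₁0 : G₁ ≠ 0 := fun h => hG (by rw [hG₁, h, mul_zero])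
  have hcop : ∀ h : Polynomial ℤ, h ∣ F₁ → h ∣ G₁ → IsUnit h := by
    intro h h1 h2
    have hDh : D * h ∣ D := dvd_gcd (hF₁ ▸ mul_dvd_mul_left D h1) (hG₁ ▸ mul_dvd_mul_left D h2)
    have h1' : D * h ∣ D * 1 := by simpa using hDh
    exact isUnit_of_dvd_one ((mul_dvd_mul_iff_left hD0).mp h1')
  obtain ⟨A, B, R, hR, hbez⟩ := bez F₁ G₁ hF₁0 hG₁0 hcop
  obtain ⟨N₁, hsgn⟩ := ev_sign D hD0
  obtain ⟨ε, hε1, hεn⟩ : ∃ ε : ℤ, (ε = 1 ∨ ε = -1) ∧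
      ∀ n : ℕ, n ≥ N₁ → (((D.eval (n:ℤ)).natAbs : ℤ)) = ε * D.eval (n:ℤ) := by
    rcases hsgn with hp | hn
    · exact ⟨1, Or.inl rfl, fun n hn' => by
        rw [Int.natAbs_of_nonneg (le_of_lt (hp n hn'))]; ring⟩
    · exact ⟨-1, Or.inr rfl, fun n hn' => by
        rw [Int.ofNat_natAbs_of_nonpos (le_of_lt (hn n hn'))]; ring⟩
  set Rn := R.natAbs with hRnd
  have hRn0 : 0 < Rn := Int.natAbs_pos.mpr hR.ne'
  have hRcast : (Rn : ℤ) = R := Int.natAbs_of_nonneg hR.le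
  have hbev : ∀ x : ℤ, A.eval x * F₁.eval x + B.eval x * G₁.eval x = R := by
    intro x
    have := congrArg (Polynomial.eval x) hbez
    simpa using this
  set y : ℕ → ℤ := fun r =>
    Int.gcdA (F₁.eval (r:ℤ)) (G₁.eval (r:ℤ)) *
      Int.gcdA ((Int.gcd (F₁.eval (r:ℤ)) (G₁.eval (r:ℤ)) : ℤ)) R with hy
  set z : ℕ → ℤ := fun r =>
    Int.gcdB (F₁.eval (r:ℤ)) (G₁.eval (r:ℤ)) *
      Int.gcdA ((Int.gcd (F₁.eval (r:ℤ)) (G₁.eval (r:ℤ)) : ℤ)) R with hz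
  set x : ℕ → ℤ := fun r =>
    Int.gcdB ((Int.gcd (F₁.eval (r:ℤ)) (G₁.eval (r:ℤ)) : ℤ)) R with hx
  set e : ℕ → ℕ := fun r => Nat.gcd (Int.gcd (F₁.eval (r:ℤ)) (G₁.eval (r:ℤ))) Rn with he
  have he_eq : ∀ r : ℕ, ((e r : ℕ) : ℤ)
      = y r * F₁.eval (r:ℤ) + z r * G₁.eval (r:ℤ) + x r * R := by
    intro r
    have h1 : ((Int.gcd (F₁.eval (r:ℤ)) (G₁.eval (r:ℤ)) : ℕ) : ℤ)
        = F₁.eval (r:ℤ) * Int.gcdA _ _ + G₁.eval (r:ℤ) * Int.gcdB _ _ :=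
      Int.gcd_eq_gcd_ab _ _
    have h2 : ((Int.gcd ((Int.gcd (F₁.eval (r:ℤ)) (G₁.eval (r:ℤ)) : ℕ) : ℤ) R : ℕ) : ℤ)
        = ((Int.gcd (F₁.eval (r:ℤ)) (G₁.eval (r:ℤ)) : ℕ) : ℤ) * Int.gcdA _ _ + R * Int.gcdB _ _ :=
      Int.gcd_eq_gcd_ab _ _
    have h3 : (e r : ℕ) = Int.gcd ((Int.gcd (F₁.eval (r:ℤ)) (G₁.eval (r:ℤ)) : ℕ) : ℤ) R := by
      rw [he]
      simp [Int.gcd, hRnd]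
    rw [h3, h2]
    simp only [hy, hz, hx]
    linear_combination (Int.gcdA ((Int.gcd (F₁.eval (r:ℤ)) (G₁.eval (r:ℤ)) : ℕ) : ℤ) R) * h1
  have hsub : ∀ n : ℕ, (R : ℤ) ∣ ((n:ℤ) - ((n % Rn : ℕ) : ℤ)) := by
    intro n
    rw [← hRcast]
    refine ⟨((n / Rn : ℕ) : ℤ), ?_⟩
    have h := Nat.div_add_mod n Rn
    rw [← Nat.cast_mul, sub_eq_iff_eq_add]
    exact_mod_cast h.symm
  have hsubF : ∀ n : ℕ, (R:ℤ) ∣ (F₁.eval (n:ℤ) - F₁.eval ((n % Rn : ℕ) : ℤ)) := fun n =>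
    (hsub n).trans (Polynomial.sub_dvd_eval_sub _ _ _)
  have hsubG : ∀ n : ℕ, (R:ℤ) ∣ (G₁.eval (n:ℤ) - G₁.eval ((n % Rn : ℕ) : ℤ)) := fun n =>
    (hsub n).trans (Polynomial.sub_dvd_eval_sub _ _ _)
  set K : ℕ → ℤ := fun n =>
    y (n % Rn) * (F₁.eval (n:ℤ) - F₁.eval ((n % Rn : ℕ) : ℤ)) +
      z (n % Rn) * (G₁.eval (n:ℤ) - G₁.eval ((n % Rn : ℕ) : ℤ)) with hK
  have hKdvd : ∀ n : ℕ, R ∣ K n := fun n =>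
    dvd_add ((hsubF n).mul_left _) ((hsubG n).mul_left _)
  set k : ℕ → ℤ := fun n => K n / R with hkd
  have hk : ∀ n : ℕ, R * k n = K n := fun n => Int.mul_ediv_cancel' (hKdvd n)
  refine ⟨fun n => ε * (y (n % Rn) + (x (n % Rn) - k n) * A.eval (n:ℤ)),
          fun n => ε * (z (n % Rn) + (x (n % Rn) - k n) * B.eval (n:ℤ)), ?_, ?_, ?_⟩
  · -- IQF a
    refine ⟨Rn, R, hRn0, hR, fun n =>
      ε * (R * y (n % Rn) + (R * x (n % Rn) - K n) * A.eval (n:ℤ)), ?_, fun n => ?_⟩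
    · apply qpp_piecewise hRn0 dvd_rfl (fun r n =>
        ε * (R * y r + (R * x r -
          (y r * (F₁.eval (n:ℤ) - F₁.eval ((r:ℕ) : ℤ)) +
            z r * (G₁.eval (n:ℤ) - G₁.eval ((r:ℕ) : ℤ)))) * A.eval (n:ℤ)))
      intro r hr
      have : (fun n : ℕ =>
          ε * (R * y r + (R * x r -
            (y r * (F₁.eval (n:ℤ) - F₁.eval ((r:ℕ) : ℤ)) +
              z r * (G₁.eval (n:ℤ) - G₁.eval ((r:ℕ) : ℤ)))) * A.eval (n:ℤ)))
          = fun n : ℕ =>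
            (Polynomial.C ε * (Polynomial.C (R * y r) + (Polynomial.C (R * x r) -
              (Polynomial.C (y r) * (F₁ - Polynomial.C (F₁.eval ((r:ℕ) : ℤ))) +
                Polynomial.C (z r) * (G₁ - Polynomial.C (G₁.eval ((r:ℕ) : ℤ))))) * A)).eval (n:ℤ) := by
        funext n
        simp only [Polynomial.eval_mul, Polynomial.eval_add, Polynomial.eval_sub,
          Polynomial.eval_C]
      rw [this]
      exact qpp_poly _
    · show ε * (R * y (n % Rn) + (R * x (n % Rn) - K n) * A.eval (n:ℤ))
        = R * (ε * (y (n % Rn) + (x (n % Rn) - k n) * A.eval (n:ℤ)))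
      linear_combination (ε * A.eval (n:ℤ)) * (hk n)
  · -- IQF b
    refine ⟨Rn, R, hRn0, hR, fun n =>
      ε * (R * z (n % Rn) + (R * x (n % Rn) - K n) * B.eval (n:ℤ)), ?_, fun n => ?_⟩
    · apply qpp_piecewise hRn0 dvd_rfl (fun r n =>
        ε * (R * z r + (R * x r -
          (y r * (F₁.eval (n:ℤ) - F₁.eval ((r:ℕ) : ℤ)) +
            z r * (G₁.eval (n:ℤ) - G₁.eval ((r:ℕ) : ℤ)))) * B.eval (n:ℤ)))
      intro r hr
      have : (fun n : ℕ =>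
          ε * (R * z r + (R * x r -
            (y r * (F₁.eval (n:ℤ) - F₁.eval ((r:ℕ) : ℤ)) +
              z r * (G₁.eval (n:ℤ) - G₁.eval ((r:ℕ) : ℤ)))) * B.eval (n:ℤ)))
          = fun n : ℕ =>
            (Polynomial.C ε * (Polynomial.C (R * z r) + (Polynomial.C (R * x r) -
              (Polynomial.C (y r) * (F₁ - Polynomial.C (F₁.eval ((r:ℕ) : ℤ))) +
                Polynomial.C (z r) * (G₁ - Polynomial.C (G₁.eval ((r:ℕ) : ℤ))))) * B)).eval (n:ℤ) := by
        funext n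
        simp only [Polynomial.eval_mul, Polynomial.eval_add, Polynomial.eval_sub,
          Polynomial.eval_C]
      rw [this]
      exact qpp_poly _
    · show ε * (R * z (n % Rn) + (R * x (n % Rn) - K n) * B.eval (n:ℤ))
        = R * (ε * (z (n % Rn) + (x (n % Rn) - k n) * B.eval (n:ℤ)))
      linear_combination (ε * B.eval (n:ℤ)) * (hk n)
  · -- eventual identity
    refine ⟨N₁, fun n hn => ?_⟩
    have hFe : F.eval (n:ℤ) = D.eval (n:ℤ) * F₁.eval (n:ℤ) := by rw [hF₁]; simp
    have hGe : G.eval (n:ℤ) = D.eval (n:ℤ) * G₁.eval (n:ℤ) := by rw [hG₁]; simp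
    have hgcd1 : Int.gcd (F.eval (n:ℤ)) (G.eval (n:ℤ))
        = (D.eval (n:ℤ)).natAbs * Int.gcd (F₁.eval (n:ℤ)) (G₁.eval (n:ℤ)) := by
      rw [hFe, hGe, Int.gcd_mul_left]
    have hdvdR : Int.gcd (F₁.eval (n:ℤ)) (G₁.eval (n:ℤ)) ∣ Rn := by
      rw [← Int.natCast_dvd_natCast, hRcast, ← hbev (n:ℤ)]
      exact dvd_add ((Int.gcd_dvd_left _ _).mul_left _) ((Int.gcd_dvd_right _ _).mul_left _)
    have hgcd2 : Int.gcd (F₁.eval (n:ℤ)) (G₁.eval (n:ℤ)) = e (n % Rn) := by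
      rw [← Nat.gcd_eq_left hdvdR, he]
      exact gcd_inv (hRcast ▸ hsubF n) (hRcast ▸ hsubG n)
    have hεD := hεn n hn
    have h7 := he_eq (n % Rn)
    have h5 := hbev (n:ℤ)
    have h6 := hk n
    rw [hK] at h6
    calc ((Int.gcd (F.eval (n:ℤ)) (G.eval (n:ℤ)) : ℕ) : ℤ)
        = (((D.eval (n:ℤ)).natAbs : ℤ)) * ((e (n % Rn) : ℕ) : ℤ) := by
          rw [hgcd1]; push_cast [hgcd2]; ring
      _ = ε * D.eval (n:ℤ) * ((e (n % Rn) : ℕ) : ℤ) := by rw [hεD]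
      _ = (fun n => ε * (y (n % Rn) + (x (n % Rn) - k n) * A.eval (n:ℤ))) n * F.eval (n:ℤ)
          + (fun n => ε * (z (n % Rn) + (x (n % Rn) - k n) * B.eval (n:ℤ))) n * G.eval (n:ℤ) := by
          show ε * D.eval (n:ℤ) * ((e (n % Rn) : ℕ) : ℤ)
            = ε * (y (n % Rn) + (x (n % Rn) - k n) * A.eval (n:ℤ)) * F.eval (n:ℤ)
              + ε * (z (n % Rn) + (x (n % Rn) - k n) * B.eval (n:ℤ)) * G.eval (n:ℤ)
          rw [hFe, hGe]
          linear_combination (ε * D.eval (n:ℤ)) * h7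
            - (ε * D.eval (n:ℤ) * (x (n % Rn) - k n)) * h5
            + (ε * D.eval (n:ℤ)) * h6


lemma IQF.isIQ' {q : ℕ → ℤ} (h : IQF q) : IsIQ q := h.isIQ

lemma iqf_zero : IQF (fun _ => 0) :=
  ⟨1, 1, one_pos, one_pos, fun _ => 0, ⟨fun _ => 0, fun _ => by simp⟩, fun _ => by ring⟩

/-- If `s`, `t` are IQ functions which are eventually positive, then `gcd(s(n), t(n))`
eventually agrees with an IQ function, and there are IQ functions `A`, `B` with
`gcd(s(n), t(n)) = A(n)·s(n) + B(n)·t(n)` for all sufficiently large `n`. -/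
theorem stmt_5 (s t : ℕ → ℤ)
    (hs : IsIQ s) (ht : IsIQ t)
    (hspos : ∃ N : ℕ, ∀ n ≥ N, 0 < s n) (htpos : ∃ N : ℕ, ∀ n ≥ N, 0 < t n) :
    ∃ G A B : ℕ → ℤ, IsIQ G ∧ IsIQ A ∧ IsIQ B ∧ ∃ N : ℕ, ∀ n ≥ N,
      (Int.gcd (s n) (t n) : ℤ) = G n ∧
      (Int.gcd (s n) (t n) : ℤ) = A n * s n + B n * t n := by
  classical
  obtain ⟨p, ⟨πs, hπs, Ps, hPs⟩, C, hC, hp⟩ := hs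
  obtain ⟨q, ⟨πt, hπt, Pt, hPt⟩, Dc, hDc, hq⟩ := ht
  have hpC : ∀ n, p n = C * s n := by
    intro n
    obtain ⟨hdvd, heq⟩ := hp n
    obtain ⟨w, hw⟩ := hdvd
    rw [heq, hw, Int.mul_ediv_cancel_left _ hC.ne']
  have hqD : ∀ n, q n = Dc * t n := by
    intro n
    obtain ⟨hdvd, heq⟩ := hq n
    obtain ⟨w, hw⟩ := hdvd
    rw [heq, hw, Int.mul_ediv_cancel_left _ hDc.ne']
  have hIQFs : IQF s := ⟨πs, C, hπs, hC, p, ⟨Ps, hPs⟩, hpC⟩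
  have hIQFt : IQF t := ⟨πt, Dc, hπt, hDc, q, ⟨Pt, hPt⟩, hqD⟩
  set π := πs * πt with hπdef
  have hπ : 0 < π := Nat.mul_pos hπs hπt
  set Fn : ℕ → ℤ := fun n => Dc * p n with hFnd
  set Gn : ℕ → ℤ := fun n => C * q n with hGnd
  have hFq : QPp π Fn := qpp_const_mul Dc (qpp_mono ⟨Ps, hPs⟩ ⟨πt, rfl⟩)
  have hGq : QPp π Gn := qpp_const_mul C (qpp_mono ⟨Pt, hPt⟩ ⟨πs, mul_comm _ _⟩)
  obtain ⟨PF, hPF⟩ := hFq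
  obtain ⟨PG, hPG⟩ := hGq
  obtain ⟨Ns, hNs⟩ := hspos
  obtain ⟨Nt, hNt⟩ := htpos
  set E : ℤ := C * Dc with hEd
  have hE : 0 < E := mul_pos hC hDc
  have hFE : ∀ n, Fn n = E * s n := fun n => by rw [hFnd]; simp only []; rw [hpC n, hEd]; ring
  have hGE : ∀ n, Gn n = E * t n := fun n => by rw [hGnd]; simp only []; rw [hqD n, hEd]; ring
  have key : ∀ r : ℕ, ∃ (a b : ℕ → ℤ) (N : ℕ), IQF a ∧ IQF b ∧ ∀ n ≥ N, n % π = r →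
      ((Int.gcd (Fn n) (Gn n) : ℤ)) = a n * Fn n + b n * Gn n := by
    intro r
    by_cases hr : r < π
    · have hbig : ∀ M : ℕ, ∃ n : ℕ, n % π = r ∧ M ≤ n := by
        intro M
        refine ⟨r + π * (M + 1), ?_, ?_⟩
        · rw [Nat.add_mul_mod_self_left, Nat.mod_eq_of_lt hr]
        · calc M ≤ π * (M + 1) := by nlinarith [hπ]
            _ ≤ r + π * (M + 1) := Nat.le_add_left _ _
      have hPF0 : PF r ≠ 0 := by
        intro h0
        obtain ⟨n, hmod, hge⟩ := hbig Ns
        have h1 : Fn n = (PF (n % π)).eval (n:ℤ) := hPF n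
        rw [hmod, h0] at h1
        simp only [Polynomial.eval_zero] at h1
        have h2 : 0 < Fn n := by rw [hFE]; exact mul_pos hE (hNs n hge)
        omega
      have hPG0 : PG r ≠ 0 := by
        intro h0
        obtain ⟨n, hmod, hge⟩ := hbig Nt
        have h1 : Gn n = (PG (n % π)).eval (n:ℤ) := hPG n
        rw [hmod, h0] at h1
        simp only [Polynomial.eval_zero] at h1
        have h2 : 0 < Gn n := by rw [hGE]; exact mul_pos hE (hNt n hge)
        omega
      obtain ⟨a, b, ha, hb, N, hN⟩ := core (PF r) (PG r) hPF0 hPG0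
      refine ⟨a, b, N, ha, hb, fun n hn hmod => ?_⟩
      have h1 := hN n hn
      rw [hPF n, hPG n, hmod]
      exact h1
    · exact ⟨fun _ => 0, fun _ => 0, 0, iqf_zero, iqf_zero, fun n _ hmod => by
        exact absurd hmod (by have := Nat.mod_lt n hπ; omega)⟩
  choose a b N ha hb hN using key
  set Af : ℕ → ℤ := fun n => a (n % π) n with hAf
  set Bf : ℕ → ℤ := fun n => b (n % π) n with hBf
  have hIQFA : IQF Af := iqf_piecewise hπ a (fun r _ => ha r)
  have hIQFB : IQF Bf := iqf_piecewise hπ b (fun r _ => hb r)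
  set Gf : ℕ → ℤ := fun n => Af n * s n + Bf n * t n with hGf
  have hIQFG : IQF Gf := iqf_add (iqf_mul hIQFA hIQFs) (iqf_mul hIQFB hIQFt)
  set Ntot : ℕ := (Finset.range π).sup N with hNtot
  refine ⟨Gf, Af, Bf, hIQFG.isIQ', hIQFA.isIQ', hIQFB.isIQ', Ntot, fun n hn => ?_⟩
  have hNle : N (n % π) ≤ Ntot :=
    Finset.le_sup (Finset.mem_range.mpr (Nat.mod_lt n hπ))
  have h1 : ((Int.gcd (Fn n) (Gn n) : ℕ) : ℤ) = Af n * Fn n + Bf n * Gn n :=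
    hN (n % π) n (le_trans hNle hn) rfl
  have h2 : Int.gcd (Fn n) (Gn n) = E.natAbs * Int.gcd (s n) (t n) := by
    rw [hFE n, hGE n, Int.gcd_mul_left]
  have hEabs : ((E.natAbs : ℕ) : ℤ) = E := Int.natAbs_of_nonneg hE.le
  have h3 : E * ((Int.gcd (s n) (t n) : ℕ) : ℤ) = E * (Af n * s n + Bf n * t n) := by
    calc E * ((Int.gcd (s n) (t n) : ℕ) : ℤ)
        = ((Int.gcd (Fn n) (Gn n) : ℕ) : ℤ) := by rw [h2]; push_cast [hEabs]; ring
      _ = Af n * Fn n + Bf n * Gn n := h1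
      _ = E * (Af n * s n + Bf n * t n) := by rw [hFE n, hGE n]; ring
  have h4 : ((Int.gcd (s n) (t n) : ℕ) : ℤ) = Af n * s n + Bf n * t n :=
    mul_left_cancel₀ hE.ne' h3
  exact ⟨h4, h4⟩
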